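/- Let X, Y be independent standard normal random variables. Then MI(Y², X − Y) = −1 + (log 2)/2 + E[ log( cosh( (X − Y)·|Y| ) ) ], i.e., the KL divergence of the joint law of (Y², X − Y) from the product of the law of Y² and the law of X − Y equals −1 + (log 2)/2 plus the expectation of log cosh((X − Y)·|Y|). -/

import Mathlib

open MeasureTheory ProbabilityTheory Real
open scoped Classical

/-- Kullback–Leibler divergence of `μ` from `ν` (with values in `EReal`),
defined as `+∞` unless `μ ≪ ν` and the log-likelihood ratio is `μ`-integrable. -/
noncomputable def klDiv {α : Type*} [MeasurableSpace α] (μ ν : Measure α) : EReal :=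
  if μ ≪ ν ∧ Integrable (llr μ ν) μ then ((∫ x, llr μ ν x ∂μ : ℝ) : EReal) else ⊤

/-- The uniform probability measure on the interval `[-δ, δ]`. -/
noncomputable def uniformIcc (δ : ℝ) : Measure ℝ :=
  (ENNReal.ofReal (2 * δ))⁻¹ • volume.restrict (Set.Icc (-δ) δ)

section Aux19helpers
open Set Function
open scoped ENNReal NNReal

namespace Aux19


noncomputable def fr (p : ℝ × ℝ) : ℝ :=
  Real.sqrt 2 * (Real.exp (-(p.2^2/4) - p.1/2) * Real.cosh (p.2 * Real.sqrt p.1))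

lemma fr_pos (p : ℝ × ℝ) : 0 < fr p := by
  unfold fr
  have := Real.cosh_pos (p.2 * Real.sqrt p.1)
  positivity

lemma continuous_fr : Continuous fr := by
  unfold fr; fun_prop

lemma log_fr (p : ℝ × ℝ) : Real.log (fr p)
    = Real.log 2 / 2 + (-(p.2^2/4) - p.1/2) + Real.log (Real.cosh (p.2 * Real.sqrt p.1)) := by
  unfold fr
  rw [Real.log_mul (by positivity) (by positivity),
    Real.log_mul (by positivity) (Real.cosh_pos _).ne', Real.log_exp, Real.log_sqrt (by norm_num),
    add_assoc]

lemma log_cosh_le (t : ℝ) : Real.log (Real.cosh t) ≤ |t| := by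
  rw [Real.log_le_iff_le_exp (Real.cosh_pos t), Real.cosh_eq]
  have h1 : Real.exp t ≤ Real.exp |t| := Real.exp_le_exp.2 (le_abs_self t)
  have h2 : Real.exp (-t) ≤ Real.exp |t| := Real.exp_le_exp.2 (neg_le_abs t)
  linarith

lemma log_cosh_nonneg (t : ℝ) : 0 ≤ Real.log (Real.cosh t) :=
  Real.log_nonneg (Real.one_le_cosh t)



lemma prod_pdf_eq (v x : ℝ) :
    gaussianPDFReal x 1 v * gaussianPDFReal 0 1 x
      = ((Real.sqrt (2*π))⁻¹ * (Real.sqrt (2*π))⁻¹ * Real.exp (-(v^2/4)))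
          * Real.exp (-(1:ℝ) * (x - v/2)^2) := by
  unfold gaussianPDFReal
  simp only [NNReal.coe_one, mul_one, sub_zero]
  have e : rexp (-(v-x)^2/2) * rexp (-x^2/2) = rexp (-(v^2/4)) * rexp (-(1:ℝ)*(x-v/2)^2) := by
    rw [← Real.exp_add, ← Real.exp_add]; congr 1; ring
  calc (√(2 * π))⁻¹ * rexp (-(v - x) ^ 2 / 2) * ((√(2 * π))⁻¹ * rexp (-x ^ 2 / 2))
      = (√(2*π))⁻¹ * (√(2*π))⁻¹ * (rexp (-(v-x)^2/2) * rexp (-x^2/2)) := by ring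
    _ = _ := by rw [e]; ring

lemma integrable_prod_pdf (v : ℝ) :
    Integrable (fun x => gaussianPDFReal x 1 v * gaussianPDFReal 0 1 x) := by
  simp only [prod_pdf_eq]
  exact ((integrable_exp_neg_mul_sq one_pos).comp_sub_right (v/2)).const_mul _

lemma conv_pointwise (v : ℝ) :
    ∫ x : ℝ, gaussianPDFReal x 1 v * gaussianPDFReal 0 1 x = gaussianPDFReal 0 2 v := by
  simp only [prod_pdf_eq]
  rw [integral_const_mul]
  have : ∫ x : ℝ, Real.exp (-(1:ℝ) * (x - v/2)^2)
      = ∫ x : ℝ, Real.exp (-(1:ℝ) * x^2) := by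
    exact integral_sub_right_eq_self (fun x => Real.exp (-(1:ℝ) * x^2)) (v/2)
  rw [this, integral_gaussian, show π / (1:ℝ) = π from div_one π]
  unfold gaussianPDFReal
  have hpi : 0 < π := Real.pi_pos
  have h2 : Real.sqrt (2*π*(2:ℝ)) = Real.sqrt (2*π) * Real.sqrt 2 :=
    Real.sqrt_mul (by positivity) 2
  have hs : Real.sqrt (2*π) * Real.sqrt (2*π) = 2*π := Real.mul_self_sqrt (by positivity)
  have hps : Real.sqrt π * Real.sqrt π = π := Real.mul_self_sqrt (by positivity)
  have h2s : Real.sqrt (2*π) = Real.sqrt 2 * Real.sqrt π := Real.sqrt_mul (by norm_num) _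
  have h22 : Real.sqrt 2 * Real.sqrt 2 = 2 := Real.mul_self_sqrt (by norm_num)
  push_cast
  rw [h2]
  have harg : -(v-0)^2 / (2*2) = -(v^2/4) := by ring
  rw [harg]
  have : (√(2 * π))⁻¹ * (√(2 * π))⁻¹ * rexp (-(v ^ 2 / 4)) * √π
      = (√(2 * π) * √2)⁻¹ * rexp (-(v ^ 2 / 4)) := by
    rw [mul_inv]
    have hne : Real.sqrt 2 ≠ 0 := by positivity
    have hnp : Real.sqrt π ≠ 0 := by positivity
    field_simp
    nlinarith [hs, hps, h22, h2s]
  linarith [this]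



lemma gaussianReal_withDensity (m : ℝ) {v : ℝ≥0} (hv : v ≠ 0) :
    gaussianReal m v
      = volume.withDensity (fun x => ((Real.toNNReal (gaussianPDFReal m v x) : ℝ≥0) : ℝ≥0∞)) := by
  rw [gaussianReal_of_var_ne_zero m hv]
  rfl

lemma integrable_sq_mul_exp {b : ℝ} (hb : 0 < b) :
    Integrable (fun x : ℝ => x^2 * Real.exp (-b * x^2)) := by
  have := integrable_rpow_mul_exp_neg_mul_sq hb (by norm_num : (-1:ℝ) < 2)
  refine this.congr ?_
  filter_upwards with x
  rw [show ((2:ℝ) = ((2:ℕ):ℝ)) by norm_num, Real.rpow_natCast]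

lemma pdf_smul_sq (v : ℝ≥0) (x : ℝ) : (Real.toNNReal (gaussianPDFReal 0 v x)) • x^2
    = (√(2*π*v))⁻¹ * (x^2 * Real.exp (-((2:ℝ)*v)⁻¹ * x^2)) := by
  rw [NNReal.smul_def, Real.coe_toNNReal _ (gaussianPDFReal_nonneg 0 v x)]
  unfold gaussianPDFReal
  rw [show -(x-0)^2/(2*(v:ℝ)) = -((2:ℝ)*(v:ℝ))⁻¹ * x^2 by field_simp; ring]
  simp only [smul_eq_mul]
  ring

lemma integrable_sq_gaussianReal {v : ℝ≥0} (hv : v ≠ 0) :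
    Integrable (fun x : ℝ => x^2) (gaussianReal 0 v) := by
  have hb : (0:ℝ) < ((2:ℝ)*v)⁻¹ := by
    have : (0:ℝ) < v := by positivity
    positivity
  rw [gaussianReal_withDensity 0 hv,
    integrable_withDensity_iff_integrable_smul ((measurable_gaussianPDFReal 0 v).real_toNNReal)]
  refine (((integrable_sq_mul_exp hb).const_mul ((√(2*π*(v:ℝ)))⁻¹)).congr ?_)
  filter_upwards with x
  rw [pdf_smul_sq]

lemma integral_sq_gaussianReal {v : ℝ≥0} (hv : v ≠ 0) :
    ∫ x, x^2 ∂(gaussianReal 0 v) = v := by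
  have hv0 : (0:ℝ) < v := by positivity
  have hb : (0:ℝ) < ((2:ℝ)*v)⁻¹ := by positivity
  rw [gaussianReal_withDensity 0 hv,
    integral_withDensity_eq_integral_smul
      ((measurable_gaussianPDFReal 0 v).real_toNNReal) (fun x => x^2)]
  simp only [pdf_smul_sq]
  rw [integral_const_mul]
  have heven : (fun x : ℝ => x^2 * Real.exp (-((2:ℝ)*v)⁻¹ * x^2))
      = fun x : ℝ => |x|^2 * Real.exp (-((2:ℝ)*v)⁻¹ * |x|^2) := by
    funext x; rw [sq_abs]
  rw [heven, integral_comp_abs (f := fun x : ℝ => x^2 * Real.exp (-((2:ℝ)*v)⁻¹ * x^2))]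
  have hrpow : ∫ x in Ioi (0:ℝ), x^2 * Real.exp (-((2:ℝ)*v)⁻¹ * x^2)
      = ∫ x in Ioi (0:ℝ), x ^ (2:ℝ) * Real.exp (-((2:ℝ)*v)⁻¹ * x ^ (2:ℝ)) := by
    refine setIntegral_congr_fun measurableSet_Ioi (fun x _ => ?_)
    rw [show ((2:ℝ) = ((2:ℕ):ℝ)) by norm_num, Real.rpow_natCast]
  rw [hrpow, integral_rpow_mul_exp_neg_mul_rpow two_pos (by norm_num : (-1:ℝ) < 2) hb]
  have hG : Real.Gamma ((2+1)/2) = (1/2) * Real.sqrt π := by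
    rw [show ((2:ℝ)+1)/2 = 1/2 + 1 by norm_num, Real.Gamma_add_one (by norm_num),
      Real.Gamma_one_half_eq]
  have hbpow : (((2:ℝ)*v)⁻¹) ^ (-((2:ℝ)+1)/2) = ((2:ℝ)*v) * Real.sqrt (2*v) := by
    have hx0 : (0:ℝ) < 2*(v:ℝ) := by positivity
    rw [Real.inv_rpow hx0.le, show (-((2:ℝ)+1)/2) = -(((2:ℝ)+1)/2) by ring,
      Real.rpow_neg hx0.le, inv_inv, show ((2:ℝ)+1)/2 = 1 + 1/2 by norm_num,
      Real.rpow_add hx0, Real.rpow_one, ← Real.sqrt_eq_rpow]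
  rw [hbpow, hG]
  have hsplit : Real.sqrt (2*π*(v:ℝ)) = Real.sqrt (2*(v:ℝ)) * Real.sqrt π := by
    rw [show (2:ℝ)*π*(v:ℝ) = (2*(v:ℝ))*π by ring, Real.sqrt_mul (by positivity)]
  have h2v : Real.sqrt (2*(v:ℝ)) * Real.sqrt (2*(v:ℝ)) = 2*(v:ℝ) :=
    Real.mul_self_sqrt (by positivity)
  have hπ : (0:ℝ) < Real.sqrt π := Real.sqrt_pos.mpr pi_pos
  have h2vpos : (0:ℝ) < Real.sqrt (2*(v:ℝ)) := Real.sqrt_pos.mpr (by positivity)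
  rw [hsplit]
  field_simp



lemma map_neg_gaussian : (gaussianReal 0 1).map (fun y : ℝ => -y) = gaussianReal 0 1 := by
  have : (fun y : ℝ => -y) = ((-1 : ℝ) * ·) := by funext y; ring
  rw [this, gaussianReal_map_const_mul (-1 : ℝ)]
  norm_num

lemma map_sub_const_gaussian (x : ℝ) :
    (gaussianReal 0 1).map (fun y : ℝ => x - y) = gaussianReal x 1 := by
  have h1 : (fun y : ℝ => x - y) = (· + x) ∘ (fun y : ℝ => -y) := by funext y; simp; ring
  rw [h1, ← Measure.map_map (measurable_add_const x) measurable_neg, map_neg_gaussian,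
    gaussianReal_map_add_const x, zero_add]

lemma measurable_pdf_pair : Measurable (fun q : ℝ × ℝ => gaussianPDF q.1 1 q.2) := by
  unfold gaussianPDF gaussianPDFReal
  apply Measurable.ennreal_ofReal
  fun_prop

lemma lconv (v : ℝ) :
    ∫⁻ x : ℝ, gaussianPDF 0 1 x * gaussianPDF x 1 v = gaussianPDF 0 2 v := by
  simp_rw [gaussianPDF, ← ENNReal.ofReal_mul (gaussianPDFReal_nonneg 0 1 _)]
  rw [← MeasureTheory.ofReal_integral_eq_lintegral_ofReal
    (by simpa [mul_comm] using integrable_prod_pdf v)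
    (Filter.Eventually.of_forall fun x =>
      mul_nonneg (gaussianPDFReal_nonneg 0 1 x) (gaussianPDFReal_nonneg x 1 v))]
  congr 1
  simp_rw [mul_comm (gaussianPDFReal 0 1 _)]
  exact conv_pointwise v

lemma map_sub_gaussian :
    ((gaussianReal 0 1).prod (gaussianReal 0 1)).map (fun p : ℝ × ℝ => p.1 - p.2)
      = gaussianReal 0 2 := by
  have hsub : Measurable (fun p : ℝ × ℝ => p.1 - p.2) := by fun_prop
  ext B hB
  rw [Measure.map_apply hsub hB, Measure.prod_apply (hsub hB)]
  have h1 : ∀ x : ℝ, (gaussianReal 0 1) (Prod.mk x ⁻¹' ((fun p : ℝ × ℝ => p.1 - p.2) ⁻¹' B))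
      = ∫⁻ v in B, gaussianPDF x 1 v := by
    intro x
    have : (Prod.mk x ⁻¹' ((fun p : ℝ × ℝ => p.1 - p.2) ⁻¹' B)) = (fun y => x - y) ⁻¹' B := rfl
    rw [this, ← Measure.map_apply (by fun_prop) hB, map_sub_const_gaussian x,
      gaussianReal_apply x one_ne_zero B]
  rw [lintegral_congr h1]
  have hmeas : Measurable (fun x => ∫⁻ v in B, gaussianPDF x 1 v) :=
    Measurable.lintegral_prod_right' (f := fun q : ℝ × ℝ => gaussianPDF q.1 1 q.2)
      measurable_pdf_pair
  rw [gaussianReal_of_var_ne_zero 0 one_ne_zero,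
    lintegral_withDensity_eq_lintegral_mul volume (measurable_gaussianPDF 0 1) hmeas]
  have h2 : ∀ x : ℝ, (gaussianPDF 0 1 * fun x => ∫⁻ v in B, gaussianPDF x 1 v) x
      = ∫⁻ v in B, gaussianPDF 0 1 x * gaussianPDF x 1 v := by
    intro x
    simp only [Pi.mul_apply]
    rw [lintegral_const_mul _ (measurable_gaussianPDF x 1)]
  rw [lintegral_congr h2,
    lintegral_lintegral_swap ((measurable_gaussianPDF 0 1).comp measurable_fst |>.mul
      measurable_pdf_pair).aemeasurable]
  rw [gaussianReal_apply 0 (by norm_num : (2:ℝ≥0) ≠ 0) B]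
  refine setLIntegral_congr_fun hB (fun v _ => ?_)
  exact lconv v



lemma density_identity (y v : ℝ) :
    gaussianPDFReal 0 2 v * fr (y^2, v)
      = (gaussianPDFReal (-y) 1 v + gaussianPDFReal y 1 v) / 2 := by
  have hcosh : Real.cosh (v * |y|) = Real.cosh (v * y) := by
    rcases abs_choice y with h | h
    · rw [h]
    · rw [h, mul_neg, Real.cosh_neg]
  unfold fr gaussianPDFReal
  simp only [NNReal.coe_one, NNReal.coe_ofNat, mul_one]
  rw [Real.sqrt_sq_eq_abs, hcosh, Real.cosh_eq]
  have h2 : Real.sqrt (2*π*(2:ℝ)) = Real.sqrt (2*π) * Real.sqrt 2 :=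
    Real.sqrt_mul (by positivity) 2
  rw [h2]
  have hs2 : Real.sqrt 2 ≠ 0 := by positivity
  have hs2pi : Real.sqrt (2*π) ≠ 0 := by positivity
  have E1 : Real.exp (-(v^2/4) - y^2/2) * Real.exp (v*y) * Real.exp (-(v-0)^2/(2*2))
      = Real.exp (-(v-y)^2/2) := by
    rw [← Real.exp_add, ← Real.exp_add]; congr 1; ring
  have E2 : Real.exp (-(v^2/4) - y^2/2) * Real.exp (-(v*y)) * Real.exp (-(v-0)^2/(2*2))
      = Real.exp (-(v-(-y))^2/2) := by
    rw [← Real.exp_add, ← Real.exp_add]; congr 1; ring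
  have k : Real.sqrt 2 * (Real.sqrt (2*π) * Real.sqrt 2)⁻¹ = (Real.sqrt (2*π))⁻¹ := by
    rw [mul_inv]
    field_simp
  linear_combination ((Real.sqrt (2*π))⁻¹/2) * E2 + ((Real.sqrt (2*π))⁻¹/2) * E1
    + (Real.exp (-(v^2/4) - y^2/2) * (Real.exp (v*y) + Real.exp (-(v*y)))
        * Real.exp (-(v-0)^2/(2*2)) / 2) * k



lemma hFm : Measurable (fun p : ℝ × ℝ => ENNReal.ofReal (fr p)) :=
  continuous_fr.measurable.ennreal_ofReal

lemma map_sub_const_gaussian' (a : ℝ) :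
    (gaussianReal 0 1).map (fun b : ℝ => b - a) = gaussianReal (-a) 1 := by
  have : (fun b : ℝ => b - a) = (· + (-a)) := funext fun b => by ring
  rw [this, gaussianReal_map_add_const (-a), zero_add]

lemma inner_eq {B : Set ℝ} (hB : MeasurableSet B) (a : ℝ) :
    (∫⁻ v, ENNReal.ofReal (fr (a^2, v)) ∂((gaussianReal 0 2).restrict B))
      = (gaussianReal (-a) 1 B + gaussianReal a 1 B) / 2 := by
  have hg : Measurable fun v : ℝ => ENNReal.ofReal (fr (a^2, v)) := by
    exact hFm.comp (by fun_prop)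
  rw [gaussianReal_of_var_ne_zero 0 (by norm_num : (2:ℝ≥0) ≠ 0), restrict_withDensity hB,
    lintegral_withDensity_eq_lintegral_mul _ (measurable_gaussianPDF 0 2) hg]
  have hpt : ∀ v : ℝ, (gaussianPDF 0 2 * fun v => ENNReal.ofReal (fr (a^2, v))) v
      = (gaussianPDF (-a) 1 v + gaussianPDF a 1 v) / 2 := by
    intro v
    simp only [Pi.mul_apply, gaussianPDF]
    rw [← ENNReal.ofReal_mul (gaussianPDFReal_nonneg 0 2 v), density_identity,
      ENNReal.ofReal_div_of_pos two_pos,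
      ENNReal.ofReal_add (gaussianPDFReal_nonneg _ _ _) (gaussianPDFReal_nonneg _ _ _)]
    norm_num
  rw [lintegral_congr hpt]
  simp_rw [div_eq_mul_inv]
  rw [lintegral_mul_const' _ _ (by norm_num),
    lintegral_add_left (measurable_gaussianPDF (-a) 1),
    ← gaussianReal_apply (-a) one_ne_zero B, ← gaussianReal_apply a one_ne_zero B]

lemma joint_eq_withDensity :
    ((gaussianReal 0 1).prod (gaussianReal 0 1)).map (fun p : ℝ × ℝ => (p.2^2, p.1 - p.2))
      = ((((gaussianReal 0 1).map (fun y : ℝ => y^2)).prod (gaussianReal 0 2)).withDensity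
          (fun p => ENNReal.ofReal (fr p))) := by
  set γ := gaussianReal 0 1 with hγ
  have hsqm : Measurable (fun y : ℝ => y^2) := by fun_prop
  have ht : Measurable (fun p : ℝ × ℝ => (p.2^2, p.1 - p.2)) := by fun_prop
  haveI : IsProbabilityMeasure (γ.map (fun y : ℝ => y^2)) :=
    Measure.isProbabilityMeasure_map hsqm.aemeasurable
  haveI : IsProbabilityMeasure ((γ.prod γ).map (fun p : ℝ × ℝ => (p.2^2, p.1 - p.2))) :=
    Measure.isProbabilityMeasure_map ht.aemeasurable
  have key : ∀ A B : Set ℝ, MeasurableSet A → MeasurableSet B →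
      ((γ.prod γ).map (fun p : ℝ × ℝ => (p.2^2, p.1 - p.2))) (A ×ˢ B)
        = (((γ.map (fun y : ℝ => y^2)).prod (gaussianReal 0 2)).withDensity
            (fun p => ENNReal.ofReal (fr p))) (A ×ˢ B) := by
    intro A B hA hB
    -- LHS
    rw [Measure.map_apply ht (hA.prod hB)]
    have hswap : γ.prod γ = (γ.prod γ).map Prod.swap := Measure.prod_swap.symm
    rw [hswap, Measure.map_apply measurable_swap (ht (hA.prod hB))]
    have hset : Prod.swap ⁻¹' ((fun p : ℝ × ℝ => (p.2^2, p.1 - p.2)) ⁻¹' (A ×ˢ B))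
        = {p : ℝ × ℝ | p.1^2 ∈ A ∧ p.2 - p.1 ∈ B} := by
      ext p
      simp [Set.mem_prod, Prod.swap]
    rw [hset, Measure.prod_apply (by
      have : {p : ℝ × ℝ | p.1^2 ∈ A ∧ p.2 - p.1 ∈ B}
          = ((fun p : ℝ × ℝ => p.1^2) ⁻¹' A) ∩ ((fun p : ℝ × ℝ => p.2 - p.1) ⁻¹' B) := rfl
      rw [this]
      exact ((hsqm.comp measurable_fst) hA).inter ((by fun_prop : Measurable fun p : ℝ × ℝ => p.2 - p.1) hB))]
    have hsec : ∀ a : ℝ, γ (Prod.mk a ⁻¹' {p : ℝ × ℝ | p.1^2 ∈ A ∧ p.2 - p.1 ∈ B})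
        = Set.indicator {a : ℝ | a^2 ∈ A} (fun a => gaussianReal (-a) 1 B) a := by
      intro a
      by_cases h : a^2 ∈ A
      · rw [Set.indicator_of_mem (show a ∈ {a : ℝ | a^2 ∈ A} from h)]
        have hpre : (Prod.mk a ⁻¹' {p : ℝ × ℝ | p.1^2 ∈ A ∧ p.2 - p.1 ∈ B})
            = (fun b : ℝ => b - a) ⁻¹' B := by
          ext b; simp [h]
        rw [hpre, ← Measure.map_apply (by fun_prop) hB, hγ, map_sub_const_gaussian' a]
      · rw [Set.indicator_of_notMem (show a ∉ {a : ℝ | a^2 ∈ A} from h)]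
        have hpre : (Prod.mk a ⁻¹' {p : ℝ × ℝ | p.1^2 ∈ A ∧ p.2 - p.1 ∈ B}) = ∅ := by
          ext b; simp [h]
        rw [hpre, measure_empty]
    rw [lintegral_congr hsec]
    -- RHS
    rw [withDensity_apply _ (hA.prod hB), ← Measure.prod_restrict,
      lintegral_prod _ hFm.aemeasurable]
    set H := fun u : ℝ => ∫⁻ v, ENNReal.ofReal (fr (u, v)) ∂((gaussianReal 0 2).restrict B)
      with hH
    have hHm : Measurable H := Measurable.lintegral_prod_right' hFm
    rw [← lintegral_indicator hA H, lintegral_map ((hHm.indicator hA)) hsqm]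
    -- pointwise identity
    have hSmeas : Measurable (fun a : ℝ => (gaussianReal (-a) 1) B) := by
      have : ∀ a : ℝ, (gaussianReal (-a) 1) B = ∫⁻ v in B, gaussianPDF (-a) 1 v := fun a =>
        gaussianReal_apply (-a) one_ne_zero B
      simp_rw [this]
      exact Measurable.lintegral_prod_right'
        (f := fun q : ℝ × ℝ => gaussianPDF (-q.1) 1 q.2)
        (by
          unfold gaussianPDF gaussianPDFReal
          exact Measurable.ennreal_ofReal (by fun_prop))
    have hSm : Measurable (Set.indicator {a : ℝ | a^2 ∈ A}
        (fun a : ℝ => (gaussianReal (-a) 1) B)) :=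
      hSmeas.indicator (hsqm hA)
    set S := Set.indicator {a : ℝ | a^2 ∈ A} (fun a : ℝ => (gaussianReal (-a) 1) B) with hS
    have hpt : ∀ a : ℝ, Set.indicator A H (a^2) = (S a + S (-a)) / 2 := by
      intro a
      by_cases h : a^2 ∈ A
      · have h' : a ∈ {a : ℝ | a^2 ∈ A} := h
        have h'' : -a ∈ {a : ℝ | a^2 ∈ A} := by simpa [neg_sq] using h
        rw [Set.indicator_of_mem h, hS, Set.indicator_of_mem h', Set.indicator_of_mem h'',
          neg_neg]
        show H (a^2) = _
        simp only [hH]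
        exact inner_eq hB a
      · have h' : a ∉ {a : ℝ | a^2 ∈ A} := h
        have h'' : -a ∉ {a : ℝ | a^2 ∈ A} := by simpa [neg_sq] using h
        rw [Set.indicator_of_notMem h, hS, Set.indicator_of_notMem h',
          Set.indicator_of_notMem h'']
        simp
    rw [lintegral_congr hpt]
    have hsym : ∫⁻ a, S (-a) ∂γ = ∫⁻ a, S a ∂γ := by
      conv_rhs => rw [hγ, ← map_neg_gaussian]
      rw [lintegral_map hSm measurable_neg]
    simp_rw [div_eq_mul_inv]
    rw [lintegral_mul_const' _ _ (by norm_num), lintegral_add_left hSm, hsym, ← two_mul,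
      mul_comm (2 : ℝ≥0∞), mul_assoc, ENNReal.mul_inv_cancel (by norm_num) (by norm_num),
      mul_one]
  refine MeasureTheory.ext_of_generate_finite _ generateFrom_prod.symm
    isPiSystem_prod (fun s hs => ?_) ?_
  · obtain ⟨A, hA, B, hB, rfl⟩ := hs
    exact key A B hA hB
  · rw [← Set.univ_prod_univ]
    exact key _ _ MeasurableSet.univ MeasurableSet.univ


end Aux19

end Aux19helpers

theorem stmt_19 {Ω : Type*} [MeasurableSpace Ω] (P : Measure Ω) [IsProbabilityMeasure P]
    (X Y : Ω → ℝ) (hX : Measurable X) (hY : Measurable Y)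
    (hindep : IndepFun X Y P)
    (hXlaw : P.map X = gaussianReal 0 1) (hYlaw : P.map Y = gaussianReal 0 1) :
    klDiv (P.map (fun ω => ((Y ω) ^ 2, X ω - Y ω)))
        ((P.map (fun ω => (Y ω) ^ 2)).prod (P.map (fun ω => X ω - Y ω)))
      = ((-1 + Real.log 2 / 2
            + ∫ ω, Real.log (Real.cosh ((X ω - Y ω) * |Y ω|)) ∂P : ℝ) : EReal) := by
  have hpairm : Measurable (fun ω => (X ω, Y ω)) := hX.prodMk hY
  have hsqm : Measurable (fun y : ℝ => y^2) := by fun_prop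
  have hsubm : Measurable (fun p : ℝ × ℝ => p.1 - p.2) := by fun_prop
  have ht : Measurable (fun p : ℝ × ℝ => (p.2^2, p.1 - p.2)) := by fun_prop
  have hgm : Measurable (fun ω => ((Y ω)^2, X ω - Y ω)) := (hsqm.comp hY).prodMk (hX.sub hY)
  have hpair : P.map (fun ω => (X ω, Y ω)) = (gaussianReal 0 1).prod (gaussianReal 0 1) := by
    refine ((indepFun_iff_map_prod_eq_prod_map_map hX.aemeasurable
      hY.aemeasurable).mp hindep).trans ?_
    rw [hXlaw, hYlaw]
  have hV : P.map (fun ω => X ω - Y ω) = gaussianReal 0 2 := by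
    rw [show (fun ω => X ω - Y ω) = (fun p : ℝ × ℝ => p.1 - p.2) ∘ (fun ω => (X ω, Y ω)) from rfl,
      ← Measure.map_map hsubm hpairm, hpair, Aux19.map_sub_gaussian]
  have hU : P.map (fun ω => (Y ω)^2) = (gaussianReal 0 1).map (fun y : ℝ => y^2) := by
    rw [show (fun ω => (Y ω)^2) = (fun y : ℝ => y^2) ∘ Y from rfl, ← Measure.map_map hsqm hY,
      hYlaw]
  set τ := (gaussianReal 0 1).map (fun y : ℝ => y^2) with hτ
  set νm := τ.prod (gaussianReal 0 2) with hνm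
  set F := fun p : ℝ × ℝ => ENNReal.ofReal (Aux19.fr p) with hF
  have hJD : P.map (fun ω => ((Y ω)^2, X ω - Y ω)) = νm.withDensity F := by
    rw [show (fun ω => ((Y ω)^2, X ω - Y ω))
        = (fun p : ℝ × ℝ => (p.2^2, p.1 - p.2)) ∘ (fun ω => (X ω, Y ω)) from rfl,
      ← Measure.map_map ht hpairm, hpair]
    exact Aux19.joint_eq_withDensity
  haveI : IsProbabilityMeasure τ := Measure.isProbabilityMeasure_map hsqm.aemeasurable
  have hAC : νm.withDensity F ≪ νm := withDensity_absolutelyContinuous _ _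
  have hRN : (νm.withDensity F).rnDeriv νm =ᵐ[νm] F := Measure.rnDeriv_withDensity νm Aux19.hFm
  have hllr : llr (νm.withDensity F) νm =ᵐ[νm.withDensity F]
      fun p => Real.log (Aux19.fr p) := by
    filter_upwards [hAC.ae_eq hRN] with p hp
    rw [llr, hp, hF, ENNReal.toReal_ofReal (Aux19.fr_pos p).le]
  -- integrability pieces over P
  have hiY2 : Integrable (fun ω => (Y ω)^2) P := by
    have h1 : Integrable (fun x : ℝ => x^2) (P.map Y) := by
      rw [hYlaw]; exact Aux19.integrable_sq_gaussianReal one_ne_zero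
    have h2 : AEStronglyMeasurable (fun x : ℝ => x^2) (P.map Y) :=
      (continuous_pow 2).measurable.aestronglyMeasurable
    exact (integrable_map_measure h2 hY.aemeasurable).mp h1
  have hiV2 : Integrable (fun ω => (X ω - Y ω)^2) P := by
    have h1 : Integrable (fun x : ℝ => x^2) (P.map (fun ω => X ω - Y ω)) := by
      rw [hV]; exact Aux19.integrable_sq_gaussianReal (by norm_num)
    have h2 : AEStronglyMeasurable (fun x : ℝ => x^2) (P.map (fun ω => X ω - Y ω)) :=
      (continuous_pow 2).measurable.aestronglyMeasurable
    exact (integrable_map_measure h2 (hX.sub hY).aemeasurable).mp h1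
  have hiLC : Integrable (fun ω => Real.log (Real.cosh ((X ω - Y ω) * |Y ω|))) P := by
    have hm : Measurable (fun ω => Real.log (Real.cosh ((X ω - Y ω) * |Y ω|))) :=
      Real.measurable_log.comp (Real.continuous_cosh.measurable.comp
        (((hX.sub hY).mul hY.abs)))
    refine Integrable.mono' ((hiV2.add hiY2).div_const 2) hm.aestronglyMeasurable ?_
    filter_upwards with ω
    simp only [Pi.add_apply]
    rw [Real.norm_eq_abs, abs_of_nonneg (Aux19.log_cosh_nonneg _)]
    refine (Aux19.log_cosh_le _).trans ?_
    rw [abs_mul, abs_abs]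
    nlinarith [sq_nonneg (|X ω - Y ω| - |Y ω|), sq_abs (X ω - Y ω), sq_abs (Y ω)]
  have hEq : ∀ ω : Ω, Real.log (Aux19.fr ((Y ω)^2, X ω - Y ω))
      = Real.log 2 / 2 + (-((X ω - Y ω)^2/4) - (Y ω)^2/2)
        + Real.log (Real.cosh ((X ω - Y ω) * |Y ω|)) := by
    intro ω
    rw [Aux19.log_fr]
    simp [Real.sqrt_sq_eq_abs]
  have hmid : Integrable (fun ω => -((X ω - Y ω)^2/4) - (Y ω)^2/2) P :=
    ((hiV2.div_const 4).neg).sub (hiY2.div_const 2)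
  have hiComp : Integrable (fun ω => Real.log (Aux19.fr ((Y ω)^2, X ω - Y ω))) P := by
    refine Integrable.congr ?_ (Filter.Eventually.of_forall fun ω => (hEq ω).symm)
    exact ((integrable_const _).add hmid).add hiLC
  have hfsm : AEStronglyMeasurable (fun p : ℝ × ℝ => Real.log (Aux19.fr p))
      (P.map (fun ω => ((Y ω)^2, X ω - Y ω))) :=
    (Real.measurable_log.comp Aux19.continuous_fr.measurable).aestronglyMeasurable
  have hiμ : Integrable (fun p : ℝ × ℝ => Real.log (Aux19.fr p)) (νm.withDensity F) := by
    rw [← hJD]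
    exact (integrable_map_measure hfsm hgm.aemeasurable).mpr hiComp
  have hIntllr : Integrable (llr (νm.withDensity F) νm) (νm.withDensity F) :=
    hiμ.congr hllr.symm
  -- integral values
  have hInt2 : ∫ ω, (X ω - Y ω)^2 ∂P = 2 := by
    have h := integral_map (φ := fun ω => X ω - Y ω) (μ := P) (hX.sub hY).aemeasurable
      (f := fun x : ℝ => x^2) (continuous_pow 2).measurable.aestronglyMeasurable
    rw [← h, hV, Aux19.integral_sq_gaussianReal (by norm_num)]
    norm_num
  have hInt1 : ∫ ω, (Y ω)^2 ∂P = 1 := by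
    have h := integral_map (φ := Y) (μ := P) hY.aemeasurable (f := fun x : ℝ => x^2)
      (continuous_pow 2).measurable.aestronglyMeasurable
    rw [← h, hYlaw, Aux19.integral_sq_gaussianReal one_ne_zero]
    norm_num
  have hval : ∫ x, llr (νm.withDensity F) νm x ∂(νm.withDensity F)
      = -1 + Real.log 2 / 2 + ∫ ω, Real.log (Real.cosh ((X ω - Y ω) * |Y ω|)) ∂P := by
    rw [integral_congr_ae hllr, ← hJD, integral_map hgm.aemeasurable hfsm]
    have hc : Integrable (fun _ : Ω => Real.log 2 / 2) P := integrable_const _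
    have hsum1 : Integrable
        (fun ω => Real.log 2 / 2 + (-((X ω - Y ω)^2/4) - (Y ω)^2/2)) P := hc.add hmid
    have hn4 : Integrable (fun ω => -((X ω - Y ω)^2/4)) P := (hiV2.div_const 4).neg
    have hd2 : Integrable (fun ω => (Y ω)^2/2) P := hiY2.div_const 2
    rw [integral_congr_ae (Filter.Eventually.of_forall hEq),
      integral_add hsum1 hiLC,
      integral_add hc hmid, integral_const, probReal_univ,
      integral_sub hn4 hd2, integral_neg,
      integral_div, integral_div, hInt1, hInt2]
    simp
    ring
  rw [hJD, hU, hV]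
  show klDiv (νm.withDensity F) νm = _
  simp only [klDiv]
  rw [if_pos ⟨hAC, hIntllr⟩, hval]
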